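/- Let S be an abelian monoid equipped with a preorder extending the algebraic ordering (x ≤ y whenever x + z = y for some z), and suppose S is almost unperforated. If θ ∈ S satisfies (k+1)θ ≤ kθ for some positive integer k, then 2θ ≤ θ, i.e., θ is properly infinite. -/

import Mathlib

/-- **Statement 11.** Let `S` be a preordered abelian monoid (the preorder is
translation-invariant and extends the algebraic ordering) which is almost unperforated.
If `θ ∈ S` satisfies `(k+1)θ ≤ kθ` for some positive integer `k`, then `2θ ≤ θ`,
i.e. `θ` is properly infinite. -/
theorem properlyInfinite_of_almostUnperforated {S : Type*} [AddCommMonoid S] [Preorder S]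
    [CovariantClass S S (· + ·) (· ≤ ·)]
    (halg : ∀ x y : S, (∃ z, x + z = y) → x ≤ y)
    (hunperf : ∀ (θ η : S) (n m : ℕ), n • θ ≤ m • η → m < n → θ ≤ η)
    (θ : S) (k : ℕ) (hk : 0 < k) (h : (k + 1) • θ ≤ k • θ) :
    2 • θ ≤ θ := by
  have key : ∀ m : ℕ, (k + m) • θ ≤ k • θ := by
    intro m
    induction m with
    | zero => simp
    | succ n ih =>
      calc (k + (n + 1)) • θ = θ + (k + n) • θ := by
            rw [show k + (n + 1) = 1 + (k + n) by ring, add_nsmul, one_nsmul]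
          _ ≤ θ + k • θ := by exact add_le_add_right ih θ
          _ = (k + 1) • θ := by rw [add_nsmul, one_nsmul, add_comm]
          _ ≤ k • θ := h
  have h2 : (k + 1) • (2 • θ) ≤ k • θ := by
    have : (k + 1) • (2 • θ) = (k + (k + 2)) • θ := by
      rw [smul_smul]; ring_nf
    rw [this]; exact key (k + 2)
  exact hunperf (2 • θ) θ (k + 1) k h2 (Nat.lt_succ_self k)
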